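/- Let L be an n×n PCB matrix and K a field. Then the set {f_C : ∅ ≠ C ⊆ {1,…,n−1}} is a minimal Gröbner basis of I(𝓛) with respect to the weighted reverse lexicographic order with weights ν(L) — each f_C is monic and its leading monomial x^{(Lχ_C)⁺} is not divisible by x^{(Lχ_D)⁺} for any nonempty D ⊆ {1,…,n−1} with D ≠ C — and {f_C} is a minimal homogeneous system of generators of I(𝓛): no proper subset of {f_C : ∅ ≠ C ⊆ {1,…,n−1}} generates I(𝓛). -/

import Mathlib

open MvPolynomial Finset

/-- A critical binomial (CB) matrix. -/
def IsCB (n : ℕ) (L : Matrix (Fin n) (Fin n) ℤ) : Prop :=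
  (∀ i, 0 < L i i) ∧ (∀ i j : Fin n, i ≠ j → L i j ≤ 0) ∧ (∀ i, ∑ j, L i j = 0) ∧
    (∀ j, ∃ i, i ≠ j ∧ L i j ≠ 0)

/-- Irreducibility of a square matrix. -/
def IsIrreducibleMat {n : ℕ} (M : Matrix (Fin n) (Fin n) ℤ) : Prop :=
  ¬ ∃ I J : Set (Fin n), I.Nonempty ∧ J.Nonempty ∧ Disjoint I J ∧ I ∪ J = Set.univ ∧
      ∀ i ∈ I, ∀ j ∈ J, M i j = 0

def IsICB (n : ℕ) (L : Matrix (Fin n) (Fin n) ℤ) : Prop := IsCB n L ∧ IsIrreducibleMat L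

def IsPCB (n : ℕ) (L : Matrix (Fin n) (Fin n) ℤ) : Prop :=
  IsCB n L ∧ ∀ i j : Fin n, i ≠ j → L i j < 0

noncomputable def posExp {n : ℕ} (m : Fin n → ℤ) : Fin n →₀ ℕ :=
  Finsupp.equivFunOnFinite.symm fun i => (m i).toNat

noncomputable def negExp {n : ℕ} (m : Fin n → ℤ) : Fin n →₀ ℕ :=
  Finsupp.equivFunOnFinite.symm fun i => (-(m i)).toNat

noncomputable def binom (K : Type*) [Field K] {n : ℕ} (m : Fin n → ℤ) :
    MvPolynomial (Fin n) K :=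
  monomial (posExp m) 1 - monomial (negExp m) 1

def colLattice {n : ℕ} (L : Matrix (Fin n) (Fin n) ℤ) : AddSubgroup (Fin n → ℤ) :=
  AddSubgroup.closure {v | ∃ j : Fin n, v = fun i => L i j}

noncomputable def latticeIdeal (K : Type*) [Field K] {n : ℕ} (L : Matrix (Fin n) (Fin n) ℤ) :
    Ideal (MvPolynomial (Fin n) K) :=
  Ideal.span {f | ∃ m ∈ colLattice L, f = binom K m}

noncomputable def matrixIdeal (K : Type*) [Field K] {n : ℕ} (L : Matrix (Fin n) (Fin n) ℤ) :
    Ideal (MvPolynomial (Fin n) K) :=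
  Ideal.span {f | ∃ j : Fin n, f = binom K fun i => L i j}

def chi {n : ℕ} (C : Finset (Fin n)) : Fin n → ℤ := fun i => if i ∈ C then 1 else 0

/-- The weighted reverse lexicographic order with weights `ν` on (exponents of)
monomials: `x^α > x^β` iff `deg x^α > deg x^β`, or the degrees agree and the
rightmost nonzero entry of `α - β` is negative. -/
def wrloGT {n : ℕ} (ν : Fin n → ℕ) (α β : Fin n →₀ ℕ) : Prop :=
  (∑ i, ν i * β i < ∑ i, ν i * α i) ∨
    ((∑ i, ν i * α i = ∑ i, ν i * β i) ∧
      ∃ j : Fin n, α j < β j ∧ ∀ k : Fin n, j < k → α k = β k)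

section Aux

variable {n : ℕ} {L : Matrix (Fin n) (Fin n) ℤ}

lemma posExp_apply (m : Fin n → ℤ) (i : Fin n) : posExp m i = (m i).toNat := rfl

lemma negExp_apply (m : Fin n → ℤ) (i : Fin n) : negExp m i = (-(m i)).toNat := rfl

lemma posExp_sub_negExp (m : Fin n → ℤ) (i : Fin n) :
    (posExp m i : ℤ) - negExp m i = m i := by
  rw [posExp_apply, negExp_apply]; omega

lemma mulVec_chi (C : Finset (Fin n)) (i : Fin n) :
    L.mulVec (chi C) i = ∑ j ∈ C, L i j := by
  simp [Matrix.mulVec, dotProduct, chi, mul_ite, Finset.sum_ite_mem,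
    Finset.univ_inter]

lemma mulVec_eq_sum (hrow : ∀ i, ∑ j, L i j = 0) (v : Fin n → ℤ) (c : ℤ) (i : Fin n) :
    L.mulVec v i = ∑ j, (-L i j) * (c - v j) := by
  have : ∑ j, (-L i j) * (c - v j) = -c * ∑ j, L i j + ∑ j, L i j * v j := by
    rw [Finset.mul_sum, ← Finset.sum_add_distrib]
    exact Finset.sum_congr rfl fun j _ => by ring
  rw [this, hrow i]
  simp [Matrix.mulVec, dotProduct]

lemma mulVec_chi_neg (hneg : ∀ i j : Fin n, i ≠ j → L i j < 0)
    (C : Finset (Fin n)) (hC : C.Nonempty) {i : Fin n} (hi : i ∉ C) :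
    L.mulVec (chi C) i < 0 := by
  rw [mulVec_chi]
  exact Finset.sum_neg (fun j hj => hneg i j (fun h => hi (h ▸ hj))) hC

lemma mulVec_chi_pos (hrow : ∀ i, ∑ j, L i j = 0) (hneg : ∀ i j : Fin n, i ≠ j → L i j < 0)
    (C : Finset (Fin n)) {i j0 : Fin n} (hi : i ∈ C) (hj0 : j0 ∉ C) :
    0 < L.mulVec (chi C) i := by
  rw [mulVec_eq_sum hrow (chi C) 1 i]
  refine Finset.sum_pos' ?_ ⟨j0, Finset.mem_univ j0, ?_⟩
  · intro j _
    by_cases hj : j ∈ C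
    · simp [chi, hj]
    · have : j ≠ i := fun h => hj (h ▸ hi)
      have := hneg i j (Ne.symm this)
      simp only [chi, if_neg hj]
      nlinarith
  · have : j0 ≠ i := fun h => hj0 (h ▸ hi)
    have := hneg i j0 (Ne.symm this)
    simp only [chi, if_neg hj0]
    nlinarith

end Aux
section Aux2

variable {n : ℕ} {L : Matrix (Fin n) (Fin n) ℤ}

lemma mulVec_chi_le_of_max (hrow : ∀ i, ∑ j, L i j = 0)
    (hneg : ∀ i j : Fin n, i ≠ j → L i j < 0)
    (z : Fin n → ℤ) (Mz : ℤ) (hmax : ∀ j, z j ≤ Mz) {i : Fin n} (hi : z i = Mz) :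
    L.mulVec (chi (Finset.univ.filter (fun j => z j = Mz))) i ≤ L.mulVec z i := by
  rw [mulVec_eq_sum hrow _ 1 i, mulVec_eq_sum hrow z Mz i]
  apply Finset.sum_le_sum
  intro j _
  by_cases hj : z j = Mz
  · simp [chi, hj]
  · have hji : j ≠ i := fun h => hj (h ▸ hi)
    have h1 := hneg i j (Ne.symm hji)
    have h2 := hmax j
    simp only [chi, Finset.mem_filter, Finset.mem_univ, true_and, if_neg hj]
    have h3 : (1:ℤ) ≤ Mz - z j := by omega
    have h4 := mul_le_mul_of_nonneg_left h3 (by linarith : (0:ℤ) ≤ -L i j)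
    linarith

lemma nu_dot (ν : Fin n → ℕ) (hνL : ∀ j, ∑ i, (ν i : ℤ) * L i j = 0) (v : Fin n → ℤ) :
    ∑ i, (ν i : ℤ) * L.mulVec v i = 0 := by
  simp only [Matrix.mulVec, dotProduct, Finset.mul_sum]
  rw [Finset.sum_comm]
  apply Finset.sum_eq_zero
  intro j _
  have : ∑ i, (ν i : ℤ) * (L i j * v j) = (∑ i, (ν i : ℤ) * L i j) * v j := by
    rw [Finset.sum_mul]
    exact Finset.sum_congr rfl fun i _ => by ring
  rw [this, hνL j, zero_mul]

lemma mem_colLattice_iff {m : Fin n → ℤ} :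
    m ∈ colLattice L ↔ ∃ z : Fin n → ℤ, m = L.mulVec z := by
  constructor
  · intro h
    induction h using AddSubgroup.closure_induction with
    | mem v hv =>
      obtain ⟨j, rfl⟩ := hv
      refine ⟨Pi.single j 1, funext fun i => ?_⟩
      simp [Matrix.mulVec, dotProduct, Pi.single_apply, mul_ite,
        Finset.sum_ite_eq']
    | zero => exact ⟨0, by simp [Matrix.mulVec_zero]⟩
    | add x y hx hy ihx ihy =>
      obtain ⟨zx, rfl⟩ := ihx; obtain ⟨zy, rfl⟩ := ihy
      exact ⟨zx + zy, (Matrix.mulVec_add L zx zy).symm⟩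
    | neg x hx ihx =>
      obtain ⟨zx, rfl⟩ := ihx
      exact ⟨-zx, (Matrix.mulVec_neg zx L).symm⟩
  · rintro ⟨z, rfl⟩
    have hrepr : L.mulVec z = ∑ j, z j • (fun i => L i j) := by
      funext i
      simp [Matrix.mulVec, dotProduct, Finset.sum_apply, mul_comm]
    rw [hrepr]
    refine AddSubgroup.sum_mem _ fun j _ =>
      AddSubgroup.zsmul_mem _ (AddSubgroup.subset_closure ?_) _
    exact ⟨j, rfl⟩

end Aux2
section Key

variable {n : ℕ} {L : Matrix (Fin n) (Fin n) ℤ}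

lemma key_mem (hrow : ∀ i, ∑ j, L i j = 0) (hneg : ∀ i j : Fin n, i ≠ j → L i j < 0)
    (ν : Fin n → ℕ) (hν : ∀ i, 0 < ν i) (hνL : ∀ j, ∑ i, (ν i : ℤ) * L i j = 0)
    (l : Fin n) (K : Type*) [Field K] :
    ∀ N : ℕ, ∀ α β : Fin n →₀ ℕ, ∀ z : Fin n → ℤ,
      (∀ i, (α i : ℤ) - β i = L.mulVec z i) →
      ((∑ i, (ν i - if i = l then 1 else 0) * α i) +
        ∑ i, (ν i - if i = l then 1 else 0) * β i) ≤ N →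
      (monomial α (1 : K) - monomial β 1) ∈
        Ideal.span {f | ∃ C : Finset (Fin n), C.Nonempty ∧ l ∉ C ∧
          f = binom K (L.mulVec (chi C))} := by
  intro N
  induction N using Nat.strong_induction_on with
  | _ N IH =>
  intro α β z hz hN
  set W : Fin n → ℕ := fun i => ν i - if i = l then 1 else 0 with hW
  have hWcast : ∀ i, ((W i : ℤ)) = (ν i : ℤ) - (if i = l then 1 else 0) := by
    intro i
    have := hν i
    by_cases h : i = l
    · subst h; simp only [hW]; simp only [if_true, eq_self_iff_true]; omega
    · simp [hW, h]
  have hN' : (∑ i, W i * α i) + (∑ i, W i * β i) ≤ N := hN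
  set J := Ideal.span {f | ∃ C : Finset (Fin n), C.Nonempty ∧ l ∉ C ∧
      f = binom K (L.mulVec (chi C))} with hJ
  have core : ∀ γ δ : Fin n →₀ ℕ, ∀ w : Fin n → ℤ,
      (∀ i, (γ i : ℤ) - δ i = L.mulVec w i) → w l = 0 → (∃ i, 0 < w i) →
      (∑ i, W i * γ i) + (∑ i, W i * δ i) ≤ N →
      (monomial γ (1 : K) - monomial δ 1) ∈ J := by
    intro γ δ w hw hwl hwpos hmeas
    obtain ⟨i0, -, hmax⟩ := Finset.exists_max_image Finset.univ w ⟨l, Finset.mem_univ l⟩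
    set Mz := w i0 with hMz
    have hmax' : ∀ j, w j ≤ Mz := fun j => hmax j (Finset.mem_univ j)
    have hMzpos : 0 < Mz := by
      obtain ⟨i, hi⟩ := hwpos; exact lt_of_lt_of_le hi (hmax' i)
    set C : Finset (Fin n) := Finset.univ.filter (fun j => w j = Mz) with hC
    have hi0C : i0 ∈ C := by simp [hC, hMz]
    have hlC : l ∉ C := by
      simp only [hC, Finset.mem_filter, Finset.mem_univ, true_and]
      omega
    set m : Fin n → ℤ := L.mulVec (chi C) with hm
    set p := posExp m with hp
    set q := negExp m with hq
    have hfC : binom K m ∈ J := hJ ▸ Ideal.subset_span ⟨C, ⟨i0, hi0C⟩, hlC, rfl⟩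
    have hmemC : ∀ i, i ∈ C → 0 < m i ∧ m i ≤ L.mulVec w i := by
      intro i hi
      refine ⟨mulVec_chi_pos hrow hneg C hi hlC, ?_⟩
      have hwi : w i = Mz := by
        simpa only [hC, Finset.mem_filter, Finset.mem_univ, true_and] using hi
      exact mulVec_chi_le_of_max hrow hneg w Mz hmax' hwi
    have hnotC : ∀ i, i ∉ C → m i < 0 := fun i hi =>
      mulVec_chi_neg hneg C ⟨i0, hi0C⟩ hi
    have hple : p ≤ γ := by
      rw [Finsupp.le_def]
      intro i
      have h3 : p i = (m i).toNat := rfl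
      by_cases hi : i ∈ C
      · have h1 := (hmemC i hi).2
        have h2 := hw i
        omega
      · have := hnotC i hi
        omega
    set γ' : Fin n →₀ ℕ := γ - p + q with hγ'
    have hγ'app : ∀ i, γ' i = γ i - p i + q i := by
      intro i; simp [hγ', Finsupp.add_apply, Finsupp.tsub_apply]
    have hpq : ∀ i, (p i : ℤ) - q i = m i := fun i => posExp_sub_negExp m i
    have hγ'cast : ∀ i, (γ' i : ℤ) = (γ i : ℤ) - p i + q i := by
      intro i
      have h1 := Finsupp.le_def.mp hple i
      have h2 := hγ'app i
      omega
    have hz2 : ∀ i, (γ' i : ℤ) - δ i = L.mulVec (w - chi C) i := by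
      intro i
      have h2 : L.mulVec (w - chi C) i = L.mulVec w i - L.mulVec (chi C) i := by
        simp [Matrix.mulVec, dotProduct, mul_sub, Finset.sum_sub_distrib]
      have h1 := hw i
      have h3 := hγ'cast i
      have h4 := hpq i
      rw [← hm] at h2
      omega
    have hml : m l < 0 := hnotC l hlC
    have hsumW : ∑ i, (W i : ℤ) * m i = - m l := by
      have h1 : ∑ i, (W i : ℤ) * m i
          = ∑ i, ((ν i : ℤ) * m i - (if i = l then 1 else 0) * m i) := by
        refine Finset.sum_congr rfl fun i _ => ?_
        rw [hWcast i]; ring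
      rw [h1, Finset.sum_sub_distrib]
      have h2 : ∑ i, (ν i : ℤ) * m i = 0 := nu_dot ν hνL (chi C)
      have h3 : ∑ i, (if i = l then (1:ℤ) else 0) * m i = m l := by
        simp [ite_mul]
      rw [h2, h3]
      ring
    have hmeasγ' : (∑ i, W i * γ' i) < ∑ i, W i * γ i := by
      have hcast : ((∑ i, W i * γ' i : ℕ) : ℤ) < ((∑ i, W i * γ i : ℕ) : ℤ) := by
        push_cast
        have heq2 : ∑ i, (W i : ℤ) * (γ' i : ℤ)
            = ∑ i, (W i : ℤ) * (γ i : ℤ) - ∑ i, (W i : ℤ) * m i := by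
          rw [← Finset.sum_sub_distrib]
          refine Finset.sum_congr rfl fun i _ => ?_
          rw [hγ'cast i, ← hpq i]; ring
        rw [heq2, hsumW]
        linarith
      exact_mod_cast hcast
    have hident : monomial γ (1:K) - monomial δ 1 =
        monomial (γ - p) 1 * binom K m + (monomial γ' 1 - monomial δ 1) := by
      have h1 : binom K m = monomial p 1 - monomial q 1 := rfl
      rw [h1, mul_sub, monomial_mul, monomial_mul, one_mul,
        tsub_add_cancel_of_le hple, ← hγ']
      ring
    have hIH := IH ((∑ i, W i * γ' i) + ∑ i, W i * δ i) (by omega)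
      γ' δ (w - chi C) hz2 (le_refl _)
    rw [hident]
    exact Ideal.add_mem _ (Ideal.mul_mem_left _ _ hfC) hIH
  by_cases h0 : ∀ i, z i - z l = 0
  · have hz0 : ∀ i, L.mulVec z i = 0 := by
      intro i
      have hzc : z = fun _ => z l := funext fun i => by have := h0 i; omega
      rw [hzc]
      simp [Matrix.mulVec, dotProduct, ← Finset.sum_mul, hrow i]
    have hab : α = β := by
      ext i
      have h1 := hz i
      have h2 := hz0 i
      omega
    rw [hab, sub_self]
    exact Ideal.zero_mem _
  · push_neg at h0
    set z' : Fin n → ℤ := fun i => z i - z l with hz'def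
    have hzv : ∀ i, (α i : ℤ) - β i = L.mulVec z' i := by
      intro i
      rw [hz i]
      simp [hz'def, Matrix.mulVec, dotProduct, mul_sub,
        Finset.sum_sub_distrib, ← Finset.sum_mul, hrow i]
    have hz'l : z' l = 0 := by simp [hz'def]
    by_cases hpos : ∃ i, 0 < z' i
    · exact core α β z' hzv hz'l hpos hN'
    · push_neg at hpos
      have hneg' : ∃ i, 0 < (-z') i := by
        obtain ⟨i, hi⟩ := h0
        refine ⟨i, ?_⟩
        have h1 := hpos i
        simp only [hz'def, Pi.neg_apply] at h1 ⊢
        omega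
      have hswap : ∀ i, (β i : ℤ) - α i = L.mulVec (-z') i := by
        intro i
        have h1 := hzv i
        have h2 : L.mulVec (-z') i = - L.mulVec z' i :=
          congrFun (Matrix.mulVec_neg z' L) i
        omega
      have hmem := core β α (-z') hswap (by simp [hz'l]) hneg'
        (by rw [Nat.add_comm]; exact hN')
      have heq : monomial α (1:K) - monomial β 1
          = -(monomial β 1 - monomial α 1) := by ring
      rw [heq]
      exact neg_mem hmem

end Key
section Parts

variable {n : ℕ} {L : Matrix (Fin n) (Fin n) ℤ}

lemma span_eq_latticeIdeal (hrow : ∀ i, ∑ j, L i j = 0)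
    (hneg : ∀ i j : Fin n, i ≠ j → L i j < 0)
    (ν : Fin n → ℕ) (hν : ∀ i, 0 < ν i) (hνL : ∀ j, ∑ i, (ν i : ℤ) * L i j = 0)
    (l : Fin n) (K : Type*) [Field K] :
    Ideal.span {f | ∃ C : Finset (Fin n), C.Nonempty ∧ l ∉ C ∧
        f = binom K (L.mulVec (chi C))} = latticeIdeal K L := by
  apply le_antisymm
  · rw [Ideal.span_le]
    rintro f ⟨C, hCne, hlC, rfl⟩
    exact Ideal.subset_span ⟨L.mulVec (chi C), mem_colLattice_iff.mpr ⟨chi C, rfl⟩, rfl⟩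
  · rw [latticeIdeal, Ideal.span_le]
    rintro f ⟨m, hm, rfl⟩
    obtain ⟨z, rfl⟩ := mem_colLattice_iff.mp hm
    exact key_mem hrow hneg ν hν hνL l K _ _ _ z
      (fun i => posExp_sub_negExp _ i) (le_refl _)

lemma coeff_lead (hneg : ∀ i j : Fin n, i ≠ j → L i j < 0)
    {l : Fin n} {C : Finset (Fin n)} (hCne : C.Nonempty) (hlC : l ∉ C)
    (K : Type*) [Field K] :
    coeff (posExp (L.mulVec (chi C))) (binom K (L.mulVec (chi C))) = 1 := by
  have hml : L.mulVec (chi C) l < 0 := mulVec_chi_neg hneg C hCne hlC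
  have hpq : posExp (L.mulVec (chi C)) ≠ negExp (L.mulVec (chi C)) := by
    intro h
    have h1 : posExp (L.mulVec (chi C)) l = (L.mulVec (chi C) l).toNat := rfl
    have h2 : negExp (L.mulVec (chi C)) l = (-(L.mulVec (chi C) l)).toNat := rfl
    have := congrArg (fun f => Finsupp.toFun f l) h
    change posExp (L.mulVec (chi C)) l = negExp (L.mulVec (chi C)) l at this
    omega
  rw [binom, coeff_sub, coeff_monomial, coeff_monomial, if_pos rfl,
    if_neg (fun h => hpq h.symm)]
  simp

lemma lead_wrlo (hrow : ∀ i, ∑ j, L i j = 0)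
    (hneg : ∀ i j : Fin n, i ≠ j → L i j < 0)
    (ν : Fin n → ℕ) (hνL : ∀ j, ∑ i, (ν i : ℤ) * L i j = 0)
    {l : Fin n} (htop : ∀ k : Fin n, k ≤ l)
    {C : Finset (Fin n)} (hCne : C.Nonempty) (hlC : l ∉ C)
    (K : Type*) [Field K] :
    ∀ α ∈ (binom K (L.mulVec (chi C))).support,
      α ≠ posExp (L.mulVec (chi C)) → wrloGT ν (posExp (L.mulVec (chi C))) α := by
  intro α hα hαp
  set m := L.mulVec (chi C) with hm
  set p := posExp m with hp
  set q := negExp m with hq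
  have hαq : α = q := by
    rw [MvPolynomial.mem_support_iff, binom, coeff_sub, coeff_monomial,
      coeff_monomial] at hα
    by_cases h1 : p = α
    · exact absurd h1.symm hαp
    · by_cases h2 : q = α
      · exact h2.symm
      · rw [if_neg h1, if_neg h2] at hα; simp at hα
  subst hαq
  right
  constructor
  · have hcast : ((∑ i, ν i * p i : ℕ) : ℤ) = ((∑ i, ν i * q i : ℕ) : ℤ) := by
      push_cast
      have h1 : ∑ i, (ν i : ℤ) * (p i : ℤ) - ∑ i, (ν i : ℤ) * (q i : ℤ)
          = ∑ i, (ν i : ℤ) * m i := by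
        rw [← Finset.sum_sub_distrib]
        refine Finset.sum_congr rfl fun i _ => ?_
        rw [← posExp_sub_negExp m i]
        ring
      have h2 := nu_dot ν hνL (chi C)
      rw [← hm] at h2
      omega
    exact_mod_cast hcast
  · refine ⟨l, ?_, fun k hk => absurd (htop k) (not_le.mpr hk)⟩
    have hml : m l < 0 := mulVec_chi_neg hneg C hCne hlC
    have h1 : p l = (m l).toNat := rfl
    have h2 : q l = (-(m l)).toNat := rfl
    omega

lemma not_dvd_lead (hrow : ∀ i, ∑ j, L i j = 0)
    (hneg : ∀ i j : Fin n, i ≠ j → L i j < 0)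
    {l : Fin n} {C D : Finset (Fin n)} (hCne : C.Nonempty) (hDne : D.Nonempty)
    (hlC : l ∉ C) (hlD : l ∉ D) (hDC : D ≠ C) :
    ¬ (posExp (L.mulVec (chi D)) : Fin n →₀ ℕ) ≤ posExp (L.mulVec (chi C)) := by
  intro hle
  rw [Finsupp.le_def] at hle
  by_cases hsub : D ⊆ C
  · obtain ⟨i, hiD⟩ := hDne
    have hiC : i ∈ C := hsub hiD
    have hlt : L.mulVec (chi C) i < L.mulVec (chi D) i := by
      rw [mulVec_chi, mulVec_chi]
      have hsd : ∑ j ∈ C \ D, L i j + ∑ j ∈ D, L i j = ∑ j ∈ C, L i j :=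
        Finset.sum_sdiff hsub
      have hne : (C \ D).Nonempty := by
        obtain ⟨i0, hi0C, hi0D⟩ := Finset.exists_of_ssubset (lt_of_le_of_ne hsub hDC)
        exact ⟨i0, Finset.mem_sdiff.mpr ⟨hi0C, hi0D⟩⟩
      have hneg' : ∑ j ∈ C \ D, L i j < 0 := by
        refine Finset.sum_neg (fun j hj => ?_) hne
        have hj' : j ∉ D := (Finset.mem_sdiff.mp hj).2
        exact hneg i j (fun h => hj' (h ▸ hiD))
      omega
    have hpos : 0 < L.mulVec (chi D) i := mulVec_chi_pos hrow hneg D hiD hlD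
    have := hle i
    have e1 : posExp (L.mulVec (chi D)) i = (L.mulVec (chi D) i).toNat := rfl
    have e2 : posExp (L.mulVec (chi C)) i = (L.mulVec (chi C) i).toNat := rfl
    omega
  · obtain ⟨i, hiD, hiC⟩ := Finset.not_subset.mp hsub
    have hpos : 0 < L.mulVec (chi D) i := mulVec_chi_pos hrow hneg D hiD hlD
    have hneg2 : L.mulVec (chi C) i < 0 := mulVec_chi_neg hneg C hCne hiC
    have := hle i
    have e1 : posExp (L.mulVec (chi D)) i = (L.mulVec (chi D) i).toNat := rfl
    have e2 : posExp (L.mulVec (chi C)) i = (L.mulVec (chi C) i).toNat := rfl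
    omega

end Parts
section Minimal

variable {n : ℕ} {L : Matrix (Fin n) (Fin n) ℤ}

lemma minimal_gen (hrow : ∀ i, ∑ j, L i j = 0)
    (hneg : ∀ i j : Fin n, i ≠ j → L i j < 0)
    (ν : Fin n → ℕ) (hν : ∀ i, 0 < ν i) (hνL : ∀ j, ∑ i, (ν i : ℤ) * L i j = 0)
    (l : Fin n) (K : Type*) [Field K] :
    ∀ S : Set (MvPolynomial (Fin n) K),
      S ⊆ {f | ∃ C : Finset (Fin n), C.Nonempty ∧ l ∉ C ∧
          f = binom K (L.mulVec (chi C))} →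
      S ≠ {f | ∃ C : Finset (Fin n), C.Nonempty ∧ l ∉ C ∧
          f = binom K (L.mulVec (chi C))} →
      Ideal.span S ≠ latticeIdeal K L := by
  intro S hsub hne hspan
  have hFS : ¬ {f | ∃ C : Finset (Fin n), C.Nonempty ∧ l ∉ C ∧
      f = binom K (L.mulVec (chi C))} ⊆ S := fun h => hne (Set.Subset.antisymm hsub h)
  obtain ⟨f0, hf0F, hf0S⟩ := Set.not_subset.mp hFS
  obtain ⟨C0, hC0ne, hlC0, rfl⟩ := hf0F
  set p0 := posExp (L.mulVec (chi C0)) with hp0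
  have hzero : ∀ g ∈ Ideal.span S, ∀ h : MvPolynomial (Fin n) K,
      coeff p0 (h * g) = 0 := by
    intro g hg
    induction hg using Submodule.span_induction with
    | mem x hx =>
      obtain ⟨D, hDne, hlD, rfl⟩ := hsub hx
      have hDC0 : D ≠ C0 := by
        rintro rfl
        exact hf0S hx
      intro h
      have hnotp : ¬ posExp (L.mulVec (chi D)) ≤ p0 :=
        not_dvd_lead hrow hneg hC0ne hDne hlC0 hlD hDC0
      have hnotq : ¬ negExp (L.mulVec (chi D)) ≤ p0 := by
        intro hle
        have h1 := (Finsupp.le_def.mp hle) l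
        have h2 : negExp (L.mulVec (chi D)) l = (-(L.mulVec (chi D) l)).toNat := rfl
        have h3 := mulVec_chi_neg hneg D hDne hlD
        have h4 : p0 l = (L.mulVec (chi C0) l).toNat := rfl
        have h5 := mulVec_chi_neg hneg C0 hC0ne hlC0
        omega
      have hbin : binom K (L.mulVec (chi D)) =
          monomial (posExp (L.mulVec (chi D))) 1
            - monomial (negExp (L.mulVec (chi D))) 1 := rfl
      rw [hbin, mul_sub, coeff_sub, coeff_mul_monomial', coeff_mul_monomial',
        if_neg hnotp, if_neg hnotq]
      ring
    | zero => intro h; simp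
    | add x y hx hy ihx ihy =>
      intro h
      rw [mul_add, coeff_add, ihx h, ihy h, add_zero]
    | smul a x hx ih =>
      intro h
      rw [smul_eq_mul, ← mul_assoc]
      exact ih (h * a)
  have hf0mem : binom K (L.mulVec (chi C0)) ∈ Ideal.span S := by
    rw [hspan, ← span_eq_latticeIdeal hrow hneg ν hν hνL l K]
    exact Ideal.subset_span ⟨C0, hC0ne, hlC0, rfl⟩
  have h1 := hzero _ hf0mem 1
  rw [one_mul, hp0, coeff_lead hneg hC0ne hlC0 K] at h1
  exact one_ne_zero h1

end Minimal
/-- Let `L` be a PCB matrix, `K` a field and `ν = ν(L)`.  Then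
`{f_C : ∅ ≠ C ⊆ {1,…,n-1}}` is a minimal Gröbner basis of `I(𝓛)` w.r.t. the weighted
reverse lexicographic order with weights `ν` — each `f_C` is monic with leading
monomial `x^{(LχC)⁺}`, and this leading monomial is not divisible by `x^{(LχD)⁺}` for
any nonempty `D ⊆ {1,…,n-1}` with `D ≠ C` — and a minimal homogeneous system of
generators of `I(𝓛)`: the `f_C` generate `I(𝓛)` and no proper subset of
`{f_C : ∅ ≠ C ⊆ {1,…,n-1}}` generates `I(𝓛)`. -/
theorem minimal_groebner_basis_of_pcb (n : ℕ) (hn : 3 ≤ n)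
    (L : Matrix (Fin n) (Fin n) ℤ) (hL : IsPCB n L)
    (K : Type*) [Field K]
    (ν : Fin n → ℕ) (hν : ∀ i, 0 < ν i) (hgcd : Finset.univ.gcd ν = 1)
    (d : ℕ) (hd : 0 < d) (hadj : ∀ i j : Fin n, L.adjugate i j = (d : ℤ) * (ν j : ℤ)) :
    (Ideal.span {f | ∃ C : Finset (Fin n),
        C.Nonempty ∧ (⟨n - 1, by omega⟩ : Fin n) ∉ C ∧
          f = binom K (L.mulVec (chi C))} = latticeIdeal K L) ∧
    (∀ C : Finset (Fin n), C.Nonempty → (⟨n - 1, by omega⟩ : Fin n) ∉ C →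
      coeff (posExp (L.mulVec (chi C))) (binom K (L.mulVec (chi C))) = 1 ∧
      ∀ α ∈ (binom K (L.mulVec (chi C))).support,
        α ≠ posExp (L.mulVec (chi C)) → wrloGT ν (posExp (L.mulVec (chi C))) α) ∧
    (∀ C D : Finset (Fin n), C.Nonempty → D.Nonempty →
      (⟨n - 1, by omega⟩ : Fin n) ∉ C → (⟨n - 1, by omega⟩ : Fin n) ∉ D → D ≠ C →
      ¬ (posExp (L.mulVec (chi D)) : Fin n →₀ ℕ) ≤ posExp (L.mulVec (chi C))) ∧
    (∀ S : Set (MvPolynomial (Fin n) K),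
      S ⊆ {f | ∃ C : Finset (Fin n),
        C.Nonempty ∧ (⟨n - 1, by omega⟩ : Fin n) ∉ C ∧
          f = binom K (L.mulVec (chi C))} →
      S ≠ {f | ∃ C : Finset (Fin n),
        C.Nonempty ∧ (⟨n - 1, by omega⟩ : Fin n) ∉ C ∧
          f = binom K (L.mulVec (chi C))} →
      Ideal.span S ≠ latticeIdeal K L) := by
  obtain ⟨⟨hdiag, hoff, hrow, hcol⟩, hneg⟩ := hL
  have hi0 : (0 : ℕ) < n := by omega
  have hdet : L.det = 0 := by
    have h := congrFun (congrFun (Matrix.mul_adjugate L) ⟨0, hi0⟩) ⟨0, hi0⟩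
    rw [Matrix.mul_apply] at h
    simp only [hadj, Matrix.smul_apply, Matrix.one_apply_eq, smul_eq_mul, mul_one] at h
    rw [← h, ← Finset.sum_mul, hrow, zero_mul]
  have hνL : ∀ j, ∑ i, (ν i : ℤ) * L i j = 0 := by
    intro j
    have h := congrFun (congrFun (Matrix.adjugate_mul L) ⟨0, hi0⟩) j
    rw [Matrix.mul_apply] at h
    simp only [hadj, hdet, Matrix.smul_apply, smul_eq_mul, zero_mul,
      Matrix.zero_apply] at h
    have h2 : ∑ k, (d : ℤ) * (ν k : ℤ) * L k j = (d : ℤ) * ∑ k, (ν k : ℤ) * L k j := by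
      rw [Finset.mul_sum]
      exact Finset.sum_congr rfl fun k _ => by ring
    rw [h2] at h
    have hd0 : (d : ℤ) ≠ 0 := by exact_mod_cast hd.ne'
    exact (mul_eq_zero.mp h).resolve_left hd0
  have htop : ∀ k : Fin n, k ≤ (⟨n - 1, by omega⟩ : Fin n) := by
    intro k
    have := k.isLt
    exact Fin.le_def.mpr (show (k : ℕ) ≤ n - 1 by omega)
  refine ⟨span_eq_latticeIdeal hrow hneg ν hν hνL _ K,
    fun C hCne hlC => ⟨coeff_lead hneg hCne hlC K,
      lead_wrlo hrow hneg ν hνL htop hCne hlC K⟩,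
    fun C D hCne hDne hlC hlD hDC => not_dvd_lead hrow hneg hCne hDne hlC hlD hDC,
    minimal_gen hrow hneg ν hν hνL _ K⟩
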